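/- Let A be symmetric positive definite and X symmetric with g_W-norm small enough that exp_A(X) := A + X + Γ_A[X]·A·Γ_A[X] is positive definite. Then the Wasserstein logarithm of exp_A(X) at A recovers X: (A·exp_A(X))^{1/2} + (exp_A(X)·A)^{1/2} − 2A = X, provided I + Γ_A[X] is positive definite. -/

import Mathlib

open Matrix

/-- Wasserstein log ∘ exp = id: if `E = exp_A(X) = A + X + Γ_A[X]·A·Γ_A[X]` is SPD and
`I + Γ_A[X]` is SPD, then `(A·E)^{1/2} + (E·A)^{1/2} − 2A = X`. Here `G = Γ_A[X]` is the
(symmetric) Sylvester solution, `SA` is the positive definite square root of `A`, `N`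
that of `SA·E·SA`, `(A·E)^{1/2} = SA·N·SA⁻¹` and `(E·A)^{1/2} = ((A·E)^{1/2})ᵀ`. -/
theorem wasserstein_log_exp {n : ℕ} (A X G SA N : Matrix (Fin n) (Fin n) ℝ)
    (hA : A.PosDef) (hX : Xᵀ = X)
    (hG : A * G + G * A = X) (hGsym : Gᵀ = G)
    (hIG : (1 + G).PosDef)
    (hE : (A + X + G * A * G).PosDef)
    (hSA : SA.PosDef) (hSAsq : SA * SA = A)
    (hN : N.PosDef) (hNsq : N * N = SA * (A + X + G * A * G) * SA) :
    (SA * N * SA⁻¹) + (SA * N * SA⁻¹)ᵀ - 2 • A = X := by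
  have hSAsym : SAᵀ = SA := hSA.isHermitian
  have hSAinv : SA * SA⁻¹ = 1 :=
    mul_nonsing_inv SA (by simpa using hSA.det_pos.ne')
  set M : Matrix (Fin n) (Fin n) ℝ := SA * (1 + G) * SA with hM
  have hMpsd : M.PosSemidef := by
    have := hIG.posSemidef.conjTranspose_mul_mul_same SA
    simpa [hM, conjTranspose_eq_transpose_of_trivial, hSAsym, Matrix.map_id] using this
  have hEfact : A + X + G * A * G = (1 + G) * A * (1 + G) := by
    rw [← hG]
    noncomm_ring
  have hNM : N = M := by
    refine (open scoped MatrixOrder Matrix.Norms.L2Operator in (CFC.sq_eq_sq_iff N M hN.posSemidef.nonneg hMpsd.nonneg).mp) ?_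
    rw [pow_two, pow_two, hNsq, hEfact, hM, ← hSAsq]
    noncomm_ring
  have hSNSi : SA * N * SA⁻¹ = A * (1 + G) := by
    rw [hNM, hM]
    calc SA * (SA * (1 + G) * SA) * SA⁻¹
        = (SA * SA) * (1 + G) * (SA * SA⁻¹) := by noncomm_ring
      _ = A * (1 + G) := by rw [hSAsq, hSAinv, mul_one]
  rw [hSNSi, transpose_mul, transpose_add, transpose_one, hGsym, show Aᵀ = A from hA.isHermitian]
  rw [← hG]
  noncomm_ring
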